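/- Let λ₁, λ₂ > 0, let Ω ⊂ ℝ⁴ be a bounded domain, and let v₁, v₂ : ℝ⁴ → (0, ∞) satisfy the two-sided bounds c_δ e^{-(1+δ)√λᵢ|x|} ≤ vᵢ(x) ≤ C_δ e^{-(1-δ)√λᵢ|x|} for every δ ∈ (0,1) and large |x|. For P₁ ≠ P₂ define I_ε[P₁,P₂] = ∫_{ℝ⁴} v₁((x-P₁)/ε)² v₂((x-P₂)/ε)² dx. Then for every σ ∈ (0,1) there exist constants c, C > 0 such that for all small ε > 0, c·e^{-(2(1+σ)/ε)·min{√λ₁, √λ₂}|P₁-P₂|} ≤ ε^{-4} I_ε[P₁,P₂] ≤ C·e^{-(2(1-σ)/ε)·min{√λ₁, √λ₂}|P₁-P₂|}. -/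

import Mathlib

open MeasureTheory

/-- Integrability of `exp (-a ‖x‖)` on `ℝ⁴`. -/
lemma aux_int_exp {a : ℝ} (ha : 0 < a) :
    Integrable (fun x : EuclideanSpace ℝ (Fin 4) => Real.exp (-a * ‖x‖)) := by
  have h5 : ((Module.finrank ℝ (EuclideanSpace ℝ (Fin 4)) : ℝ)) < 5 := by
    norm_num [finrank_euclideanSpace_fin]
  have hK : (0:ℝ) < 120 * Real.exp a / a ^ 5 := by positivity
  refine ((integrable_one_add_norm (μ := (volume : Measure (EuclideanSpace ℝ (Fin 4)))) h5).const_mul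
      (120 * Real.exp a / a ^ 5)).mono' ?_ ?_
  · exact (Continuous.aestronglyMeasurable (by fun_prop))
  · filter_upwards with x
    set t : ℝ := ‖x‖ with ht
    have ht0 : (0:ℝ) ≤ t := norm_nonneg x
    have h1t : (0:ℝ) < 1 + t := by linarith
    have hkey : (a * (1 + t)) ^ 5 / (Nat.factorial 5) ≤ Real.exp (a * (1 + t)) :=
      Real.pow_div_factorial_le_exp _ (by positivity) 5
    have hfac : ((Nat.factorial 5 : ℝ)) = 120 := by norm_num [Nat.factorial]
    have hexp : Real.exp (a * (1 + t)) = Real.exp a * Real.exp (a * t) := by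
      rw [← Real.exp_add]; exact congrArg Real.exp (by ring)
    have hkey' : a ^ 5 * (1 + t) ^ 5 ≤ 120 * Real.exp a * Real.exp (a * t) := by
      rw [hfac, hexp] at hkey
      nlinarith [hkey, Real.exp_pos (a * t), Real.exp_pos a]
    have hrpow : (1 + t) ^ (-(5:ℝ)) = ((1 + t) ^ (5:ℕ))⁻¹ := by
      rw [show (-(5:ℝ)) = -((5:ℕ):ℝ) by norm_num, Real.rpow_neg h1t.le, Real.rpow_natCast]
    have hnorm : ‖Real.exp (-a * t)‖ = Real.exp (-(a * t)) := by
      rw [Real.norm_eq_abs, Real.abs_exp, neg_mul]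
    rw [hnorm, hrpow]
    rw [Real.exp_neg, show (120 * Real.exp a / a ^ 5 * ((1 + t) ^ (5:ℕ))⁻¹)
        = (120 * Real.exp a) / (a ^ 5 * (1 + t) ^ 5) by
      field_simp]
    rw [inv_eq_one_div, div_le_div_iff₀ (Real.exp_pos _) (by positivity)]
    nlinarith [hkey']

/-- Squares of `C * exp t`. -/
lemma sq_mul_exp (C t : ℝ) : (C * Real.exp t) ^ 2 = C ^ 2 * Real.exp (2 * t) := by
  rw [mul_pow, ← Real.exp_nat_mul]; norm_num

/-- Extension of the exponential two-sided bounds from a neighborhood of infinity to all of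
`ℝ⁴`, using continuity and positivity on compact sets. -/
lemma aux_global (l : ℝ) (hl : 0 < l) (v : EuclideanSpace ℝ (Fin 4) → ℝ)
    (hcont : Continuous v) (hpos : ∀ x, 0 < v x)
    (δ : ℝ) (hδ0 : 0 < δ) (hδ1 : δ < 1)
    (hdec : ∃ c C R : ℝ, 0 < c ∧ 0 < C ∧
      ∀ x : EuclideanSpace ℝ (Fin 4), R ≤ ‖x‖ →
        c * Real.exp (-(1 + δ) * Real.sqrt l * ‖x‖) ≤ v x ∧
        v x ≤ C * Real.exp (-(1 - δ) * Real.sqrt l * ‖x‖)) :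
    ∃ c C : ℝ, 0 < c ∧ 0 < C ∧ ∀ x : EuclideanSpace ℝ (Fin 4),
      c * Real.exp (-(1 + δ) * Real.sqrt l * ‖x‖) ≤ v x ∧
      v x ≤ C * Real.exp (-(1 - δ) * Real.sqrt l * ‖x‖) := by
  obtain ⟨c, C, R, hc, hC, h⟩ := hdec
  set R' : ℝ := max R 0 with hR'
  have hR'0 : 0 ≤ R' := le_max_right _ _
  have hRR' : R ≤ R' := le_max_left _ _
  have hK : IsCompact (Metric.closedBall (0 : EuclideanSpace ℝ (Fin 4)) R') :=
    isCompact_closedBall _ _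
  have hKne : (Metric.closedBall (0 : EuclideanSpace ℝ (Fin 4)) R').Nonempty :=
    ⟨0, Metric.mem_closedBall_self hR'0⟩
  obtain ⟨xM, _, hxM⟩ := hK.exists_isMaxOn hKne hcont.continuousOn
  obtain ⟨xm, _, hxm⟩ := hK.exists_isMinOn hKne hcont.continuousOn
  have hs : 0 ≤ Real.sqrt l := Real.sqrt_nonneg l
  refine ⟨min c (v xm), max C (v xM * Real.exp ((1 - δ) * Real.sqrt l * R')),
    lt_min hc (hpos xm), lt_max_of_lt_left hC, fun x => ?_⟩
  rcases le_total ‖x‖ R' with hx | hx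
  · have hxmem : x ∈ Metric.closedBall (0 : EuclideanSpace ℝ (Fin 4)) R' := by
      simpa [Metric.mem_closedBall, dist_zero_right] using hx
    constructor
    · have h1 : Real.exp (-(1 + δ) * Real.sqrt l * ‖x‖) ≤ 1 := by
        rw [Real.exp_le_one_iff]
        have : 0 ≤ (1 + δ) * Real.sqrt l * ‖x‖ :=
          mul_nonneg (mul_nonneg (by linarith) hs) (norm_nonneg x)
        linarith
      calc min c (v xm) * Real.exp (-(1 + δ) * Real.sqrt l * ‖x‖)
          ≤ v xm * 1 := by
            apply mul_le_mul (min_le_right _ _) h1 (Real.exp_pos _).le (hpos xm).le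
        _ = v xm := mul_one _
        _ ≤ v x := hxm hxmem
    · have h2 : (1:ℝ) ≤ Real.exp ((1 - δ) * Real.sqrt l * R') * Real.exp (-(1 - δ) * Real.sqrt l * ‖x‖) := by
        rw [← Real.exp_add]
        have h0 : (0:ℝ) ≤ (1 - δ) * Real.sqrt l * R' + -(1 - δ) * Real.sqrt l * ‖x‖ := by
          nlinarith [mul_nonneg (mul_nonneg (by linarith : (0:ℝ) ≤ 1 - δ) hs) (sub_nonneg.2 hx)]
        calc (1:ℝ) = Real.exp 0 := Real.exp_zero.symm
          _ ≤ _ := Real.exp_le_exp.2 h0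
      calc v x ≤ v xM := hxM hxmem
        _ = v xM * 1 := (mul_one _).symm
        _ ≤ v xM * (Real.exp ((1 - δ) * Real.sqrt l * R') * Real.exp (-(1 - δ) * Real.sqrt l * ‖x‖)) := by
            apply mul_le_mul_of_nonneg_left h2 (hpos xM).le
        _ = v xM * Real.exp ((1 - δ) * Real.sqrt l * R') * Real.exp (-(1 - δ) * Real.sqrt l * ‖x‖) := by
            ring
        _ ≤ max C (v xM * Real.exp ((1 - δ) * Real.sqrt l * R')) * Real.exp (-(1 - δ) * Real.sqrt l * ‖x‖) := by
            apply mul_le_mul_of_nonneg_right (le_max_right _ _) (Real.exp_pos _).le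
  · obtain ⟨hlow, hup⟩ := h x (hRR'.trans hx)
    constructor
    · calc min c (v xm) * Real.exp (-(1 + δ) * Real.sqrt l * ‖x‖)
          ≤ c * Real.exp (-(1 + δ) * Real.sqrt l * ‖x‖) := by
            apply mul_le_mul_of_nonneg_right (min_le_left _ _) (Real.exp_pos _).le
        _ ≤ v x := hlow
    · calc v x ≤ C * Real.exp (-(1 - δ) * Real.sqrt l * ‖x‖) := hup
        _ ≤ max C (v xM * Real.exp ((1 - δ) * Real.sqrt l * R')) * Real.exp (-(1 - δ) * Real.sqrt l * ‖x‖) := by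
            apply mul_le_mul_of_nonneg_right (le_max_left _ _) (Real.exp_pos _).le

set_option maxHeartbeats 2000000 in
/-- Core estimate for the translated profile integral on `ℝ⁴`. -/
lemma aux_core (l₁ l₂ : ℝ) (hl₁ : 0 < l₁) (hl₂ : 0 < l₂)
    (v₁ v₂ : EuclideanSpace ℝ (Fin 4) → ℝ)
    (hcont₁ : Continuous v₁) (hcont₂ : Continuous v₂)
    (hpos₁ : ∀ x, 0 < v₁ x) (hpos₂ : ∀ x, 0 < v₂ x)
    (hdec₁ : ∀ δ : ℝ, 0 < δ → δ < 1 → ∃ c C R : ℝ, 0 < c ∧ 0 < C ∧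
      ∀ x : EuclideanSpace ℝ (Fin 4), R ≤ ‖x‖ →
        c * Real.exp (-(1 + δ) * Real.sqrt l₁ * ‖x‖) ≤ v₁ x ∧
        v₁ x ≤ C * Real.exp (-(1 - δ) * Real.sqrt l₁ * ‖x‖))
    (hdec₂ : ∀ δ : ℝ, 0 < δ → δ < 1 → ∃ c C R : ℝ, 0 < c ∧ 0 < C ∧
      ∀ x : EuclideanSpace ℝ (Fin 4), R ≤ ‖x‖ →
        c * Real.exp (-(1 + δ) * Real.sqrt l₂ * ‖x‖) ≤ v₂ x ∧
        v₂ x ≤ C * Real.exp (-(1 - δ) * Real.sqrt l₂ * ‖x‖))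
    (σ : ℝ) (hσ0 : 0 < σ) (hσ1 : σ < 1) :
    ∃ c C : ℝ, 0 < c ∧ 0 < C ∧ ∀ q : EuclideanSpace ℝ (Fin 4),
      c * Real.exp (-(2 * (1 + σ)) * min (Real.sqrt l₁) (Real.sqrt l₂) * ‖q‖) ≤
        (∫ y, (v₁ y) ^ 2 * (v₂ (y - q)) ^ 2) ∧
      (∫ y, (v₁ y) ^ 2 * (v₂ (y - q)) ^ 2) ≤
        C * Real.exp (-(2 * (1 - σ)) * min (Real.sqrt l₁) (Real.sqrt l₂) * ‖q‖) := by
  set δ : ℝ := σ / 2 with hδ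
  have hδ0 : 0 < δ := by positivity
  have hδ1 : δ < 1 := by simp only [hδ]; linarith
  set k₁ : ℝ := Real.sqrt l₁ with hk₁def
  set k₂ : ℝ := Real.sqrt l₂ with hk₂def
  have hk₁ : 0 < k₁ := Real.sqrt_pos.2 hl₁
  have hk₂ : 0 < k₂ := Real.sqrt_pos.2 hl₂
  set m : ℝ := min k₁ k₂ with hmdef
  have hm : 0 < m := lt_min hk₁ hk₂
  have h1mδ : (0:ℝ) < 1 - δ := by linarith
  have h1pδ : (0:ℝ) < 1 + δ := by linarith
  obtain ⟨c₁, C₁, hc₁, hC₁, hb₁⟩ := aux_global l₁ hl₁ v₁ hcont₁ hpos₁ δ hδ0 hδ1 (hdec₁ δ hδ0 hδ1)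
  obtain ⟨c₂, C₂, hc₂, hC₂, hb₂⟩ := aux_global l₂ hl₂ v₂ hcont₂ hpos₂ δ hδ0 hδ1 (hdec₂ δ hδ0 hδ1)
  -- squared global bounds
  have hub₁ : ∀ y, (v₁ y) ^ 2 ≤ C₁ ^ 2 * Real.exp (-(2 * (1 - δ) * k₁) * ‖y‖) := by
    intro y
    have := (hb₁ y).2
    calc (v₁ y) ^ 2 ≤ (C₁ * Real.exp (-(1 - δ) * k₁ * ‖y‖)) ^ 2 :=
          pow_le_pow_left₀ (hpos₁ y).le this 2
      _ = C₁ ^ 2 * Real.exp (-(2 * (1 - δ) * k₁) * ‖y‖) := by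
          rw [sq_mul_exp]; exact congrArg (fun t => C₁ ^ 2 * Real.exp t) (by ring)
  have hub₂ : ∀ y, (v₂ y) ^ 2 ≤ C₂ ^ 2 * Real.exp (-(2 * (1 - δ) * k₂) * ‖y‖) := by
    intro y
    have := (hb₂ y).2
    calc (v₂ y) ^ 2 ≤ (C₂ * Real.exp (-(1 - δ) * k₂ * ‖y‖)) ^ 2 :=
          pow_le_pow_left₀ (hpos₂ y).le this 2
      _ = C₂ ^ 2 * Real.exp (-(2 * (1 - δ) * k₂) * ‖y‖) := by
          rw [sq_mul_exp]; exact congrArg (fun t => C₂ ^ 2 * Real.exp t) (by ring)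
  have hlb₁ : ∀ y, c₁ ^ 2 * Real.exp (-(2 * (1 + δ) * k₁) * ‖y‖) ≤ (v₁ y) ^ 2 := by
    intro y
    have := (hb₁ y).1
    calc c₁ ^ 2 * Real.exp (-(2 * (1 + δ) * k₁) * ‖y‖)
        = (c₁ * Real.exp (-(1 + δ) * k₁ * ‖y‖)) ^ 2 := by
          rw [sq_mul_exp]; exact congrArg (fun t => c₁ ^ 2 * Real.exp t) (by ring)
      _ ≤ (v₁ y) ^ 2 := pow_le_pow_left₀ (by positivity) this 2
  have hlb₂ : ∀ y, c₂ ^ 2 * Real.exp (-(2 * (1 + δ) * k₂) * ‖y‖) ≤ (v₂ y) ^ 2 := by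
    intro y
    have := (hb₂ y).1
    calc c₂ ^ 2 * Real.exp (-(2 * (1 + δ) * k₂) * ‖y‖)
        = (c₂ * Real.exp (-(1 + δ) * k₂ * ‖y‖)) ^ 2 := by
          rw [sq_mul_exp]; exact congrArg (fun t => c₂ ^ 2 * Real.exp t) (by ring)
      _ ≤ (v₂ y) ^ 2 := pow_le_pow_left₀ (by positivity) this 2
  -- integrability of the integrand, for each q
  have hint : ∀ q : EuclideanSpace ℝ (Fin 4),
      Integrable (fun y => (v₁ y) ^ 2 * (v₂ (y - q)) ^ 2) := by
    intro q
    have hmeas : AEStronglyMeasurable (fun y : EuclideanSpace ℝ (Fin 4) =>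
        (v₁ y) ^ 2 * (v₂ (y - q)) ^ 2) volume :=
      (((hcont₁.pow 2).mul ((hcont₂.comp (continuous_id.sub continuous_const)).pow 2))).aestronglyMeasurable
    refine ((aux_int_exp (a := 2 * (1 - δ) * k₁)
        (mul_pos (mul_pos two_pos h1mδ) hk₁)).const_mul
        (C₁ ^ 2 * C₂ ^ 2)).mono' hmeas ?_
    filter_upwards with y
    have h1 : (v₂ (y - q)) ^ 2 ≤ C₂ ^ 2 := by
      refine (hub₂ (y - q)).trans ?_
      have : Real.exp (-(2 * (1 - δ) * k₂) * ‖y - q‖) ≤ 1 := by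
        rw [Real.exp_le_one_iff]
        have : 0 ≤ 2 * (1 - δ) * k₂ * ‖y - q‖ :=
          mul_nonneg (mul_pos (mul_pos two_pos h1mδ) hk₂).le (norm_nonneg _)
        linarith
      nlinarith [sq_nonneg C₂]
    have h2 := hub₁ y
    have hnn : ‖(v₁ y) ^ 2 * (v₂ (y - q)) ^ 2‖ = (v₁ y) ^ 2 * (v₂ (y - q)) ^ 2 := by
      rw [Real.norm_eq_abs, abs_of_nonneg (by positivity)]
    rw [hnn]
    calc (v₁ y) ^ 2 * (v₂ (y - q)) ^ 2
        ≤ (C₁ ^ 2 * Real.exp (-(2 * (1 - δ) * k₁) * ‖y‖)) * C₂ ^ 2 := by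
          apply mul_le_mul h2 h1 (by positivity) (by positivity)
      _ = C₁ ^ 2 * C₂ ^ 2 * Real.exp (-(2 * (1 - δ) * k₁) * ‖y‖) := by ring
  -- the "mass" constants
  set θ : ℝ := σ / 2 with hθ
  have hθ0 : 0 < θ := by positivity
  have hθ1 : θ < 1 := by simp only [hθ]; linarith
  have h1mθ : (0:ℝ) < 1 - θ := by linarith
  set A : ℝ := ∫ y : EuclideanSpace ℝ (Fin 4), Real.exp (-(2 * (1 - δ) * m * θ) * ‖y‖) with hA
  have hA0 : 0 ≤ A := integral_nonneg fun y => (Real.exp_pos _).le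
  set V : ℝ := (volume (Metric.ball (0 : EuclideanSpace ℝ (Fin 4)) 1)).toReal with hV
  have hV0 : 0 < V := by
    rw [hV]
    exact ENNReal.toReal_pos (Metric.measure_ball_pos volume _ one_pos).ne' measure_ball_lt_top.ne
  refine ⟨c₁ ^ 2 * c₂ ^ 2 * Real.exp (-(2 * (1 + δ) * (k₁ + k₂))) * V,
    C₁ ^ 2 * C₂ ^ 2 * (A + 1), mul_pos (by positivity) hV0,
    mul_pos (by positivity) (by linarith : (0:ℝ) < A + 1), fun q => ?_⟩
  have hq0 : (0:ℝ) ≤ ‖q‖ := norm_nonneg q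
  constructor
  · -- LOWER BOUND
    rcases le_total k₁ k₂ with hk | hk
    · -- m = k₁ ; ball around q
      have hmk : m = k₁ := min_eq_left hk
      set B : Set (EuclideanSpace ℝ (Fin 4)) := Metric.ball q 1 with hB
      have hVB : (volume B).toReal = V := by
        rw [hV, hB, Measure.addHaar_ball_center]
      have hbound : ∀ y ∈ B,
          c₁ ^ 2 * c₂ ^ 2 * Real.exp (-(2 * (1 + δ) * (k₁ + k₂)))
            * Real.exp (-(2 * (1 + δ) * k₁) * ‖q‖) ≤ (v₁ y) ^ 2 * (v₂ (y - q)) ^ 2 := by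
        intro y hy
        have hyq : ‖y - q‖ ≤ 1 := by
          have := Metric.mem_ball.1 hy
          rw [dist_eq_norm] at this; linarith
        have hyn : ‖y‖ ≤ ‖q‖ + 1 := by
          have := norm_sub_norm_le y q
          linarith
        have e1 : Real.exp (-(2 * (1 + δ) * k₁) * (‖q‖ + 1)) ≤
            Real.exp (-(2 * (1 + δ) * k₁) * ‖y‖) := by
          apply Real.exp_le_exp.2
          nlinarith [mul_nonneg (mul_pos (mul_pos two_pos h1pδ) hk₁).le (sub_nonneg.2 hyn)]
        have e2 : Real.exp (-(2 * (1 + δ) * k₂) * 1) ≤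
            Real.exp (-(2 * (1 + δ) * k₂) * ‖y - q‖) := by
          apply Real.exp_le_exp.2
          nlinarith [mul_nonneg (mul_pos (mul_pos two_pos h1pδ) hk₂).le (sub_nonneg.2 hyq)]
        calc c₁ ^ 2 * c₂ ^ 2 * Real.exp (-(2 * (1 + δ) * (k₁ + k₂)))
              * Real.exp (-(2 * (1 + δ) * k₁) * ‖q‖)
            = (c₁ ^ 2 * Real.exp (-(2 * (1 + δ) * k₁) * (‖q‖ + 1)))
              * (c₂ ^ 2 * Real.exp (-(2 * (1 + δ) * k₂) * 1)) := by
              rw [show -(2 * (1 + δ) * k₁) * (‖q‖ + 1)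
                    = -(2 * (1 + δ) * k₁) * ‖q‖ + -(2 * (1 + δ) * k₁) by ring,
                Real.exp_add,
                show -(2 * (1 + δ) * (k₁ + k₂))
                    = -(2 * (1 + δ) * k₁) + -(2 * (1 + δ) * k₂) * 1 by ring,
                Real.exp_add]
              ring
          _ ≤ (c₁ ^ 2 * Real.exp (-(2 * (1 + δ) * k₁) * ‖y‖))
              * (c₂ ^ 2 * Real.exp (-(2 * (1 + δ) * k₂) * ‖y - q‖)) := by
              apply mul_le_mul (mul_le_mul_of_nonneg_left e1 (sq_nonneg c₁))
                (mul_le_mul_of_nonneg_left e2 (sq_nonneg c₂))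
                (by positivity) (by positivity)
          _ ≤ (v₁ y) ^ 2 * (v₂ (y - q)) ^ 2 := by
              apply mul_le_mul (hlb₁ y) (hlb₂ (y - q)) (by positivity)
                (by positivity)
      have h1 : (c₁ ^ 2 * c₂ ^ 2 * Real.exp (-(2 * (1 + δ) * (k₁ + k₂)))
            * Real.exp (-(2 * (1 + δ) * k₁) * ‖q‖)) * (volume B).toReal
          ≤ ∫ y in B, (v₁ y) ^ 2 * (v₂ (y - q)) ^ 2 :=
        setIntegral_ge_of_const_le_real Metric.isOpen_ball.measurableSet
          measure_ball_lt_top.ne hbound ((hint q).integrableOn)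
      have h2 : (∫ y in B, (v₁ y) ^ 2 * (v₂ (y - q)) ^ 2)
          ≤ ∫ y, (v₁ y) ^ 2 * (v₂ (y - q)) ^ 2 :=
        setIntegral_le_integral (hint q) (Filter.Eventually.of_forall fun y => by positivity)
      have h3 : Real.exp (-(2 * (1 + σ)) * m * ‖q‖) ≤ Real.exp (-(2 * (1 + δ) * k₁) * ‖q‖) := by
        apply Real.exp_le_exp.2
        rw [hmk]
        nlinarith [mul_nonneg hk₁.le hq0]
      calc c₁ ^ 2 * c₂ ^ 2 * Real.exp (-(2 * (1 + δ) * (k₁ + k₂))) * V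
            * Real.exp (-(2 * (1 + σ)) * m * ‖q‖)
          ≤ c₁ ^ 2 * c₂ ^ 2 * Real.exp (-(2 * (1 + δ) * (k₁ + k₂))) * V
            * Real.exp (-(2 * (1 + δ) * k₁) * ‖q‖) := by
            exact mul_le_mul_of_nonneg_left h3 (mul_nonneg (by positivity) hV0.le)
        _ = (c₁ ^ 2 * c₂ ^ 2 * Real.exp (-(2 * (1 + δ) * (k₁ + k₂)))
            * Real.exp (-(2 * (1 + δ) * k₁) * ‖q‖)) * (volume B).toReal := by
            rw [hVB]; ring
        _ ≤ ∫ y in B, (v₁ y) ^ 2 * (v₂ (y - q)) ^ 2 := h1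
        _ ≤ ∫ y, (v₁ y) ^ 2 * (v₂ (y - q)) ^ 2 := h2
    · -- m = k₂ ; ball around 0
      have hmk : m = k₂ := min_eq_right hk
      set B : Set (EuclideanSpace ℝ (Fin 4)) := Metric.ball (0 : EuclideanSpace ℝ (Fin 4)) 1 with hB
      have hVB : (volume B).toReal = V := by rw [hV, hB]
      have hbound : ∀ y ∈ B,
          c₁ ^ 2 * c₂ ^ 2 * Real.exp (-(2 * (1 + δ) * (k₁ + k₂)))
            * Real.exp (-(2 * (1 + δ) * k₂) * ‖q‖) ≤ (v₁ y) ^ 2 * (v₂ (y - q)) ^ 2 := by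
        intro y hy
        have hyn : ‖y‖ ≤ 1 := by
          have := Metric.mem_ball.1 hy
          rw [dist_zero_right] at this; linarith
        have hyq : ‖y - q‖ ≤ ‖q‖ + 1 := by
          have := norm_sub_le y q
          linarith
        have e1 : Real.exp (-(2 * (1 + δ) * k₁) * 1) ≤
            Real.exp (-(2 * (1 + δ) * k₁) * ‖y‖) := by
          apply Real.exp_le_exp.2
          nlinarith [mul_nonneg (mul_pos (mul_pos two_pos h1pδ) hk₁).le (sub_nonneg.2 hyn)]
        have e2 : Real.exp (-(2 * (1 + δ) * k₂) * (‖q‖ + 1)) ≤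
            Real.exp (-(2 * (1 + δ) * k₂) * ‖y - q‖) := by
          apply Real.exp_le_exp.2
          nlinarith [mul_nonneg (mul_pos (mul_pos two_pos h1pδ) hk₂).le (sub_nonneg.2 hyq)]
        calc c₁ ^ 2 * c₂ ^ 2 * Real.exp (-(2 * (1 + δ) * (k₁ + k₂)))
              * Real.exp (-(2 * (1 + δ) * k₂) * ‖q‖)
            = (c₁ ^ 2 * Real.exp (-(2 * (1 + δ) * k₁) * 1))
              * (c₂ ^ 2 * Real.exp (-(2 * (1 + δ) * k₂) * (‖q‖ + 1))) := by
              rw [show -(2 * (1 + δ) * k₂) * (‖q‖ + 1)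
                    = -(2 * (1 + δ) * k₂) * ‖q‖ + -(2 * (1 + δ) * k₂) by ring,
                Real.exp_add,
                show -(2 * (1 + δ) * (k₁ + k₂))
                    = -(2 * (1 + δ) * k₁) * 1 + -(2 * (1 + δ) * k₂) by ring,
                Real.exp_add]
              ring
          _ ≤ (c₁ ^ 2 * Real.exp (-(2 * (1 + δ) * k₁) * ‖y‖))
              * (c₂ ^ 2 * Real.exp (-(2 * (1 + δ) * k₂) * ‖y - q‖)) := by
              apply mul_le_mul (mul_le_mul_of_nonneg_left e1 (sq_nonneg c₁))
                (mul_le_mul_of_nonneg_left e2 (sq_nonneg c₂))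
                (by positivity) (by positivity)
          _ ≤ (v₁ y) ^ 2 * (v₂ (y - q)) ^ 2 := by
              apply mul_le_mul (hlb₁ y) (hlb₂ (y - q)) (by positivity)
                (by positivity)
      have h1 : (c₁ ^ 2 * c₂ ^ 2 * Real.exp (-(2 * (1 + δ) * (k₁ + k₂)))
            * Real.exp (-(2 * (1 + δ) * k₂) * ‖q‖)) * (volume B).toReal
          ≤ ∫ y in B, (v₁ y) ^ 2 * (v₂ (y - q)) ^ 2 :=
        setIntegral_ge_of_const_le_real Metric.isOpen_ball.measurableSet
          measure_ball_lt_top.ne hbound ((hint q).integrableOn)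
      have h2 : (∫ y in B, (v₁ y) ^ 2 * (v₂ (y - q)) ^ 2)
          ≤ ∫ y, (v₁ y) ^ 2 * (v₂ (y - q)) ^ 2 :=
        setIntegral_le_integral (hint q) (Filter.Eventually.of_forall fun y => by positivity)
      have h3 : Real.exp (-(2 * (1 + σ)) * m * ‖q‖) ≤ Real.exp (-(2 * (1 + δ) * k₂) * ‖q‖) := by
        apply Real.exp_le_exp.2
        rw [hmk]
        nlinarith [mul_nonneg hk₂.le hq0]
      calc c₁ ^ 2 * c₂ ^ 2 * Real.exp (-(2 * (1 + δ) * (k₁ + k₂))) * V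
            * Real.exp (-(2 * (1 + σ)) * m * ‖q‖)
          ≤ c₁ ^ 2 * c₂ ^ 2 * Real.exp (-(2 * (1 + δ) * (k₁ + k₂))) * V
            * Real.exp (-(2 * (1 + δ) * k₂) * ‖q‖) := by
            exact mul_le_mul_of_nonneg_left h3 (mul_nonneg (by positivity) hV0.le)
        _ = (c₁ ^ 2 * c₂ ^ 2 * Real.exp (-(2 * (1 + δ) * (k₁ + k₂)))
            * Real.exp (-(2 * (1 + δ) * k₂) * ‖q‖)) * (volume B).toReal := by
            rw [hVB]; ring
        _ ≤ ∫ y in B, (v₁ y) ^ 2 * (v₂ (y - q)) ^ 2 := h1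
        _ ≤ ∫ y, (v₁ y) ^ 2 * (v₂ (y - q)) ^ 2 := h2
  · -- UPPER BOUND
    have hmono : ∀ y : EuclideanSpace ℝ (Fin 4),
        (v₁ y) ^ 2 * (v₂ (y - q)) ^ 2 ≤
          (C₁ ^ 2 * C₂ ^ 2 * Real.exp (-(2 * (1 - δ) * m * (1 - θ)) * ‖q‖))
            * Real.exp (-(2 * (1 - δ) * m * θ) * ‖y‖) := by
      intro y
      have htri : ‖q‖ ≤ ‖y‖ + ‖y - q‖ := by
        have : ‖y - (y - q)‖ ≤ ‖y‖ + ‖y - q‖ := norm_sub_le _ _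
        simpa using this
      have hyq0 : (0:ℝ) ≤ ‖y - q‖ := norm_nonneg _
      have hy0 : (0:ℝ) ≤ ‖y‖ := norm_nonneg _
      have hm1 : m ≤ k₁ := min_le_left _ _
      have hm2 : m ≤ k₂ := min_le_right _ _
      have step1 : (v₁ y) ^ 2 * (v₂ (y - q)) ^ 2 ≤
          C₁ ^ 2 * C₂ ^ 2 * Real.exp (-(2 * (1 - δ) * k₁) * ‖y‖ + -(2 * (1 - δ) * k₂) * ‖y - q‖) := by
        rw [Real.exp_add]
        calc (v₁ y) ^ 2 * (v₂ (y - q)) ^ 2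
            ≤ (C₁ ^ 2 * Real.exp (-(2 * (1 - δ) * k₁) * ‖y‖))
              * (C₂ ^ 2 * Real.exp (-(2 * (1 - δ) * k₂) * ‖y - q‖)) := by
              apply mul_le_mul (hub₁ y) (hub₂ (y - q)) (by positivity) (by positivity)
          _ = C₁ ^ 2 * C₂ ^ 2 * (Real.exp (-(2 * (1 - δ) * k₁) * ‖y‖)
              * Real.exp (-(2 * (1 - δ) * k₂) * ‖y - q‖)) := by ring
      have step2 : Real.exp (-(2 * (1 - δ) * k₁) * ‖y‖ + -(2 * (1 - δ) * k₂) * ‖y - q‖) ≤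
          Real.exp (-(2 * (1 - δ) * m * (1 - θ)) * ‖q‖ + -(2 * (1 - δ) * m * θ) * ‖y‖) := by
        apply Real.exp_le_exp.2
        have h2δ : (0:ℝ) ≤ 2 * (1 - δ) := by linarith
        -- k₁‖y‖ + k₂‖y-q‖ ≥ m(‖y‖+‖y-q‖) ≥ (1-θ)m‖q‖ + θm‖y‖
        nlinarith [mul_nonneg h2δ (mul_nonneg (sub_nonneg.2 hm1) hy0),
          mul_nonneg h2δ (mul_nonneg (sub_nonneg.2 hm2) hyq0),
          mul_nonneg (mul_nonneg h2δ hm.le) (mul_nonneg hθ0.le hyq0),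
          mul_nonneg (mul_nonneg h2δ hm.le) (mul_nonneg (by linarith : (0:ℝ) ≤ 1 - θ)
            (sub_nonneg.2 htri))]
      calc (v₁ y) ^ 2 * (v₂ (y - q)) ^ 2
          ≤ C₁ ^ 2 * C₂ ^ 2 * Real.exp (-(2 * (1 - δ) * k₁) * ‖y‖ + -(2 * (1 - δ) * k₂) * ‖y - q‖) :=
            step1
        _ ≤ C₁ ^ 2 * C₂ ^ 2 * Real.exp (-(2 * (1 - δ) * m * (1 - θ)) * ‖q‖ + -(2 * (1 - δ) * m * θ) * ‖y‖) := by
            apply mul_le_mul_of_nonneg_left step2 (by positivity)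
        _ = (C₁ ^ 2 * C₂ ^ 2 * Real.exp (-(2 * (1 - δ) * m * (1 - θ)) * ‖q‖))
            * Real.exp (-(2 * (1 - δ) * m * θ) * ‖y‖) := by
            rw [Real.exp_add]; ring
    have hDint : Integrable (fun y : EuclideanSpace ℝ (Fin 4) =>
        (C₁ ^ 2 * C₂ ^ 2 * Real.exp (-(2 * (1 - δ) * m * (1 - θ)) * ‖q‖))
          * Real.exp (-(2 * (1 - δ) * m * θ) * ‖y‖)) :=
      (aux_int_exp (mul_pos (mul_pos (mul_pos two_pos h1mδ) hm) hθ0)).const_mul _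
    have hIle : (∫ y, (v₁ y) ^ 2 * (v₂ (y - q)) ^ 2) ≤
        ∫ y, (C₁ ^ 2 * C₂ ^ 2 * Real.exp (-(2 * (1 - δ) * m * (1 - θ)) * ‖q‖))
          * Real.exp (-(2 * (1 - δ) * m * θ) * ‖y‖) :=
      integral_mono_of_nonneg (Filter.Eventually.of_forall fun y => by positivity) hDint
        (Filter.Eventually.of_forall hmono)
    have hDval : (∫ y : EuclideanSpace ℝ (Fin 4), (C₁ ^ 2 * C₂ ^ 2 * Real.exp (-(2 * (1 - δ) * m * (1 - θ)) * ‖q‖))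
          * Real.exp (-(2 * (1 - δ) * m * θ) * ‖y‖))
        = (C₁ ^ 2 * C₂ ^ 2 * Real.exp (-(2 * (1 - δ) * m * (1 - θ)) * ‖q‖)) * A := by
      rw [hA, integral_const_mul]
    have hexp : Real.exp (-(2 * (1 - δ) * m * (1 - θ)) * ‖q‖) ≤
        Real.exp (-(2 * (1 - σ)) * m * ‖q‖) := by
      apply Real.exp_le_exp.2
      have : (0:ℝ) ≤ m * ‖q‖ := mul_nonneg hm.le hq0
      -- 2(1-δ)(1-θ) = 2(1-σ/2)² ≥ 2(1-σ)
      rw [hδ, hθ]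
      nlinarith [this, sq_nonneg σ]
    calc (∫ y, (v₁ y) ^ 2 * (v₂ (y - q)) ^ 2)
        ≤ (C₁ ^ 2 * C₂ ^ 2 * Real.exp (-(2 * (1 - δ) * m * (1 - θ)) * ‖q‖)) * A := by
          rw [← hDval]; exact hIle
      _ ≤ (C₁ ^ 2 * C₂ ^ 2 * Real.exp (-(2 * (1 - σ)) * m * ‖q‖)) * A := by
          apply mul_le_mul_of_nonneg_right (by
            apply mul_le_mul_of_nonneg_left hexp (by positivity)) hA0
      _ ≤ C₁ ^ 2 * C₂ ^ 2 * (A + 1) * Real.exp (-(2 * (1 - σ)) * m * ‖q‖) := by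
          nlinarith [Real.exp_pos (-(2 * (1 - σ)) * m * ‖q‖), sq_nonneg (C₁ * C₂),
            mul_pos (mul_pos (pow_pos hC₁ 2) (pow_pos hC₂ 2)) (Real.exp_pos (-(2 * (1 - σ)) * m * ‖q‖))]

/-- interaction estimate between two exponentially decaying profiles.
If v₁, v₂ > 0 satisfy two-sided exponential bounds at rates √λ₁, √λ₂, then
I_ε[P₁,P₂] = ∫ v₁((x-P₁)/ε)² v₂((x-P₂)/ε)² satisfies, for each σ ∈ (0,1),
c e^{-2(1+σ)min{√λ₁,√λ₂}|P₁-P₂|/ε} ≤ ε⁻⁴I_ε ≤ C e^{-2(1-σ)min{√λ₁,√λ₂}|P₁-P₂|/ε}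
for small ε. -/
theorem stmt_15 (Ω : Set (EuclideanSpace ℝ (Fin 4))) (hbdd : Bornology.IsBounded Ω)
    (l₁ l₂ : ℝ) (hl₁ : 0 < l₁) (hl₂ : 0 < l₂)
    (v₁ v₂ : EuclideanSpace ℝ (Fin 4) → ℝ)
    (hcont₁ : Continuous v₁) (hcont₂ : Continuous v₂)
    (hpos₁ : ∀ x, 0 < v₁ x) (hpos₂ : ∀ x, 0 < v₂ x)
    (hdec₁ : ∀ δ : ℝ, 0 < δ → δ < 1 → ∃ c C R : ℝ, 0 < c ∧ 0 < C ∧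
      ∀ x : EuclideanSpace ℝ (Fin 4), R ≤ ‖x‖ →
        c * Real.exp (-(1 + δ) * Real.sqrt l₁ * ‖x‖) ≤ v₁ x ∧
        v₁ x ≤ C * Real.exp (-(1 - δ) * Real.sqrt l₁ * ‖x‖))
    (hdec₂ : ∀ δ : ℝ, 0 < δ → δ < 1 → ∃ c C R : ℝ, 0 < c ∧ 0 < C ∧
      ∀ x : EuclideanSpace ℝ (Fin 4), R ≤ ‖x‖ →
        c * Real.exp (-(1 + δ) * Real.sqrt l₂ * ‖x‖) ≤ v₂ x ∧
        v₂ x ≤ C * Real.exp (-(1 - δ) * Real.sqrt l₂ * ‖x‖))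
    (P₁ P₂ : EuclideanSpace ℝ (Fin 4)) (hP₁ : P₁ ∈ Ω) (hP₂ : P₂ ∈ Ω)
    (hPne : P₁ ≠ P₂) :
    ∀ σ : ℝ, 0 < σ → σ < 1 →
      ∃ c C ε₀ : ℝ, 0 < c ∧ 0 < C ∧ 0 < ε₀ ∧
        ∀ ε : ℝ, 0 < ε → ε < ε₀ →
          c * Real.exp (-(2 * (1 + σ) / ε) *
              min (Real.sqrt l₁) (Real.sqrt l₂) * dist P₁ P₂) ≤
            (ε ^ 4)⁻¹ *
              ∫ x, (v₁ (ε⁻¹ • (x - P₁))) ^ 2 * (v₂ (ε⁻¹ • (x - P₂))) ^ 2 ∧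
          (ε ^ 4)⁻¹ *
              (∫ x, (v₁ (ε⁻¹ • (x - P₁))) ^ 2 * (v₂ (ε⁻¹ • (x - P₂))) ^ 2) ≤
            C * Real.exp (-(2 * (1 - σ) / ε) *
              min (Real.sqrt l₁) (Real.sqrt l₂) * dist P₁ P₂) := by
  intro σ hσ0 hσ1
  obtain ⟨c, C, hc, hC, hq⟩ := aux_core l₁ l₂ hl₁ hl₂ v₁ v₂ hcont₁ hcont₂ hpos₁ hpos₂
    hdec₁ hdec₂ σ hσ0 hσ1
  refine ⟨c, C, 1, hc, hC, one_pos, fun ε hε _ => ?_⟩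
  set q : EuclideanSpace ℝ (Fin 4) := ε⁻¹ • (P₂ - P₁) with hqdef
  set m : ℝ := min (Real.sqrt l₁) (Real.sqrt l₂) with hm
  -- change of variables
  have hswap : (fun x : EuclideanSpace ℝ (Fin 4) =>
      (v₁ (ε⁻¹ • (x - P₁))) ^ 2 * (v₂ (ε⁻¹ • (x - P₂))) ^ 2)
      = fun x => (v₁ (ε⁻¹ • (x - P₁))) ^ 2 * (v₂ (ε⁻¹ • (x - P₁) - q)) ^ 2 := by
    funext x
    have harg : ε⁻¹ • (x - P₂) = ε⁻¹ • (x - P₁) - q := by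
      rw [hqdef, ← smul_sub]
      congr 1
      abel
    rw [harg]
  have hCOV : (∫ x, (v₁ (ε⁻¹ • (x - P₁))) ^ 2 * (v₂ (ε⁻¹ • (x - P₂))) ^ 2)
      = ε ^ 4 * ∫ y, (v₁ y) ^ 2 * (v₂ (y - q)) ^ 2 := by
    calc (∫ x, (v₁ (ε⁻¹ • (x - P₁))) ^ 2 * (v₂ (ε⁻¹ • (x - P₂))) ^ 2)
        = ∫ x, (v₁ (ε⁻¹ • (x - P₁))) ^ 2 * (v₂ (ε⁻¹ • (x - P₁) - q)) ^ 2 := by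
          rw [hswap]
      _ = ∫ z, (v₁ (ε⁻¹ • z)) ^ 2 * (v₂ (ε⁻¹ • z - q)) ^ 2 :=
          integral_sub_right_eq_self
            (fun z => (v₁ (ε⁻¹ • z)) ^ 2 * (v₂ (ε⁻¹ • z - q)) ^ 2) P₁
      _ = ε ^ 4 * ∫ y, (v₁ y) ^ 2 * (v₂ (y - q)) ^ 2 := by
          have h := MeasureTheory.Measure.integral_comp_inv_smul_of_nonneg volume
            (fun w => (v₁ w) ^ 2 * (v₂ (w - q)) ^ 2) hε.le
          simpa [finrank_euclideanSpace_fin, smul_eq_mul] using h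
  have hε4 : (ε : ℝ) ^ 4 ≠ 0 := by positivity
  have hJ : (ε ^ 4)⁻¹ * (∫ x, (v₁ (ε⁻¹ • (x - P₁))) ^ 2 * (v₂ (ε⁻¹ • (x - P₂))) ^ 2)
      = ∫ y, (v₁ y) ^ 2 * (v₂ (y - q)) ^ 2 := by
    rw [hCOV, ← mul_assoc, inv_mul_cancel₀ hε4, one_mul]
  have hqnorm : ‖q‖ = ε⁻¹ * dist P₁ P₂ := by
    rw [hqdef, norm_smul, Real.norm_eq_abs, abs_of_pos (inv_pos.2 hε), dist_comm, dist_eq_norm]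
  obtain ⟨hlow, hup⟩ := hq q
  constructor
  · have : -(2 * (1 + σ) / ε) * m * dist P₁ P₂ = -(2 * (1 + σ)) * m * ‖q‖ := by
      rw [hqnorm]; ring
    rw [this, hJ]
    exact hlow
  · have : -(2 * (1 - σ) / ε) * m * dist P₁ P₂ = -(2 * (1 - σ)) * m * ‖q‖ := by
      rw [hqnorm]; ring
    rw [this, hJ]
    exact hup
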